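/- arXiv:2307.10167 — 3 statements merged into one kernel-verified Lean document; each statement's English description precedes it below -/
import Mathlib

section
/- Let $(B_k)_{k \geq 0}$ be a sequence of invertible $d \times d$ matrices defined recursively by $B_{k+1} = (\mathrm{I} - h M_k) B_k + h (B_k^{-1})^{\top}$ for step size $h > 0$ and symmetric matrices $M_k$, and let $(\Sigma_k)_{k \geq 0}$ be defined by $\Sigma_{k+1} = (\mathrm{I} - h(M_k - \Sigma_k^{-1})) \Sigma_k (\mathrm{I} - h(M_k - \Sigma_k^{-1}))$ with $\Sigma_0 = B_0 B_0^{\top}$. Then for all $k$, $B_k B_k^{\top} = \Sigma_k$. -/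
open Matrix

/-- The square-root recursion tracks the covariance recursion: `B k * (B k)ᵀ = Σ k`. -/
theorem sqrt_recursion_tracks_covariance {d : ℕ} (h : ℝ) (hh : 0 < h)
    (M : ℕ → Matrix (Fin d) (Fin d) ℝ) (hM : ∀ k, (M k).IsSymm)
    (B S : ℕ → Matrix (Fin d) (Fin d) ℝ)
    (hBinv : ∀ k, IsUnit (B k))
    (hSpos : ∀ k, (S k).PosDef)
    (hB : ∀ k, B (k+1) = ((1 : Matrix (Fin d) (Fin d) ℝ) - h • M k) * B k + h • ((B k)⁻¹)ᵀ)
    (hS : ∀ k, S (k+1)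
      = ((1 : Matrix (Fin d) (Fin d) ℝ) - h • (M k - (S k)⁻¹)) * S k
        * ((1 : Matrix (Fin d) (Fin d) ℝ) - h • (M k - (S k)⁻¹)))
    (hS0 : S 0 = B 0 * (B 0)ᵀ) :
    ∀ k, B k * (B k)ᵀ = S k := by
  intro k
  induction k with
  | zero => exact hS0.symm
  | succ k ih =>
    set A : Matrix (Fin d) (Fin d) ℝ :=
      (1 : Matrix (Fin d) (Fin d) ℝ) - h • (M k - (S k)⁻¹) with hA
    have hBu := hBinv k
    have hSinvB : (S k)⁻¹ * B k = ((B k)⁻¹)ᵀ := by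
      rw [← ih, Matrix.mul_inv_rev, Matrix.mul_assoc,
        Matrix.nonsing_inv_mul _ (isUnit_iff_isUnit_det _ |>.mp hBu),
        Matrix.mul_one, Matrix.transpose_nonsing_inv]
    have hBk1 : B (k+1) = A * B k := by
      rw [hB k, hA]
      simp only [Matrix.sub_mul, Matrix.one_mul, Matrix.smul_mul, smul_sub,
        Matrix.sub_mul, hSinvB]
      abel
    have hAT : Aᵀ = A := by
      have hS' : (S k)ᵀ = S k := by
        have := (hSpos k).isHermitian.eq
        simpa [Matrix.conjTranspose_eq_transpose_of_trivial] using this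
      have hSsym : ((S k)⁻¹)ᵀ = (S k)⁻¹ := by
        rw [Matrix.transpose_nonsing_inv, hS']
      rw [hA]
      simp [transpose_sub, transpose_smul, (hM k).eq, hSsym]
    rw [hBk1, hS k, Matrix.transpose_mul, hAT, ← Matrix.mul_assoc,
      Matrix.mul_assoc A, ih]
end

section
/- (Covariance lower bound preservation, single step.) Let $V$ be a symmetric positive definite $d \times d$ matrix, $\eta > 0$, and let the step size satisfy $h \leq \frac{\lambda_{\min}(V)}{2\eta(\lambda_{\min}(V)^2 + 2\lambda_{\max}(V)^2)}$. Set $A = \mathrm{I} - \eta h V$. If $\Sigma$ is symmetric positive definite with $\Sigma \succeq V^{-1}/(2\eta)$, then $\Sigma' = A \Sigma A + 2h A + h^2 \Sigma^{-1}$ also satisfies $\Sigma' \succeq V^{-1}/(2\eta)$. -/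
open Matrix

lemma posSemidef_smul_of_nonneg {n : Type*} [Fintype n] {M : Matrix n n ℝ}
    (hM : M.PosSemidef) {c : ℝ} (hc : 0 ≤ c) : (c • M).PosSemidef := by
  refine ⟨?_, fun x => ?_⟩
  · show (c • M)ᴴ = c • M
    rw [conjTranspose_smul, star_trivial, hM.1]
  exact (hM.smul hc).2 x

lemma one_sub_smul_posSemidef {n : Type*} [Fintype n] [DecidableEq n]
    (V : Matrix n n ℝ) (hH : V.IsHermitian) (c : ℝ)
    (hb : ∀ i, c * hH.eigenvalues i ≤ 1) : (1 - c • V).PosSemidef := by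
  have hU : (hH.eigenvectorUnitary : Matrix n n ℝ) *
      star (hH.eigenvectorUnitary : Matrix n n ℝ) = 1 :=
    Matrix.mem_unitaryGroup_iff.mp hH.eigenvectorUnitary.2
  have key : 1 - c • V = (hH.eigenvectorUnitary : Matrix n n ℝ) *
      (diagonal (fun i => 1 - c * hH.eigenvalues i)) *
      star (hH.eigenvectorUnitary : Matrix n n ℝ) := by
    have hd : (diagonal (fun i => 1 - c * hH.eigenvalues i) : Matrix n n ℝ)
        = 1 - c • diagonal (RCLike.ofReal ∘ hH.eigenvalues) := by
      ext i j
      by_cases hij : i = j <;>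
        simp [diagonal, hij, Matrix.one_apply, Function.comp]
    rw [hd, mul_sub, sub_mul, mul_one, hU,
      mul_smul_comm, smul_mul_assoc]
    conv_lhs => rw [hH.spectral_theorem, Unitary.conjStarAlgAut_apply]
  rw [key, Matrix.star_eq_conjTranspose]
  exact (Matrix.posSemidef_diagonal_iff.mpr fun i => by
    linarith [hb i]).mul_mul_conjTranspose_same _

/-- Covariance lower bound preservation, single step. -/
theorem covariance_lower_bound_preserved {d : ℕ} [DecidableEq (Fin d)]
    (V : Matrix (Fin d) (Fin d) ℝ) (hV : V.PosDef) (hH : V.IsHermitian)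
    (lmin lmax : ℝ)
    (hlmin : IsLeast (Set.range hH.eigenvalues) lmin)
    (hlmax : IsGreatest (Set.range hH.eigenvalues) lmax)
    (η h : ℝ) (hη : 0 < η)
    (hstep : 0 < h ∧ h ≤ lmin / (2 * η * (lmin^2 + 2 * lmax^2)))
    (Sig : Matrix (Fin d) (Fin d) ℝ) (hSig : Sig.PosDef)
    (hlow : (Sig - (2 * η)⁻¹ • V⁻¹).PosSemidef) :
    let A : Matrix (Fin d) (Fin d) ℝ := 1 - (η * h) • V
    ((A * Sig * A + (2 * h) • A + (h^2) • Sig⁻¹) - (2 * η)⁻¹ • V⁻¹).PosSemidef := by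
  intro A
  obtain ⟨hh, hstep⟩ := hstep
  obtain ⟨i, hi⟩ := hlmin.1
  obtain ⟨j, hj⟩ := hlmax.1
  have hminpos : 0 < lmin := hi ▸ hV.eigenvalues_pos i
  have hmaxpos : 0 < lmax := hj ▸ hV.eigenvalues_pos j
  -- eigenvalue bound for the middle term
  have hbound : ∀ k, (3 / 2 * η * h) * hH.eigenvalues k ≤ 1 := by
    intro k
    have h1 : hH.eigenvalues k ≤ lmax := hlmax.2 ⟨k, rfl⟩
    have h2 : 0 < hH.eigenvalues k := hV.eigenvalues_pos k
    have hd : 0 < 2 * η * (lmin ^ 2 + 2 * lmax ^ 2) := by positivity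
    have hle : h * (2 * η * (lmin ^ 2 + 2 * lmax ^ 2)) ≤ lmin := by
      calc h * (2 * η * (lmin ^ 2 + 2 * lmax ^ 2))
          ≤ lmin / (2 * η * (lmin ^ 2 + 2 * lmax ^ 2)) *
              (2 * η * (lmin ^ 2 + 2 * lmax ^ 2)) :=
            mul_le_mul_of_nonneg_right hstep hd.le
        _ = lmin := div_mul_cancel₀ _ hd.ne'
    have h3 : (3 / 2 * η * h) * hH.eigenvalues k ≤ (3 / 2 * η * h) * lmax :=
      mul_le_mul_of_nonneg_left h1 (by positivity)
    have hml : lmin ≤ lmax := hlmax.2 hlmin.1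
    nlinarith [sq_nonneg (lmin - lmax), sq_nonneg lmax, mul_pos hη hh]
  -- invertibility of V
  have hdet : IsUnit V.det := isUnit_iff_ne_zero.mpr hV.det_pos.ne'
  have hVV : V * V⁻¹ = 1 := mul_nonsing_inv V hdet
  have hVV' : V⁻¹ * V = 1 := nonsing_inv_mul V hdet
  have hne : η ≠ 0 := hη.ne'
  -- key computation : A * W * A
  have key : A * ((2 * η)⁻¹ • V⁻¹) * A
      = (2 * η)⁻¹ • V⁻¹ - h • 1 + (η * h ^ 2 / 2) • V := by
    show (1 - (η * h) • V) * ((2 * η)⁻¹ • V⁻¹) * (1 - (η * h) • V) = _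
    simp only [sub_mul, mul_sub, one_mul, mul_one, smul_mul_assoc, mul_smul_comm,
      smul_smul, hVV, hVV']
    match_scalars <;> field_simp <;> ring
  -- decomposition into PSD pieces
  have decomp : (A * Sig * A + (2 * h) • A + (h ^ 2) • Sig⁻¹) - (2 * η)⁻¹ • V⁻¹
      = A * (Sig - (2 * η)⁻¹ • V⁻¹) * A
        + h • (1 - (3 / 2 * η * h) • V) + (h ^ 2) • Sig⁻¹ := by
    have expand : A * (Sig - (2 * η)⁻¹ • V⁻¹) * A
        = A * Sig * A - A * ((2 * η)⁻¹ • V⁻¹) * A := by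
      noncomm_ring
    rw [expand, key]
    have hA : A = 1 - (η * h) • V := rfl
    rw [hA]
    simp only [smul_sub, smul_smul]
    module
  rw [decomp]
  have hAH : Aᴴ = A := by
    show ((1 : Matrix (Fin d) (Fin d) ℝ) - (η * h) • V)ᴴ = _
    rw [conjTranspose_sub, conjTranspose_smul, conjTranspose_one, hH.eq, star_trivial]
  have t1 : (A * (Sig - (2 * η)⁻¹ • V⁻¹) * A).PosSemidef := by
    have := hlow.mul_mul_conjTranspose_same A
    rwa [hAH] at this
  have t2 : (h • (1 - (3 / 2 * η * h) • V)).PosSemidef :=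
    posSemidef_smul_of_nonneg (one_sub_smul_posSemidef V hH _ hbound) hh.le
  have t3 : ((h ^ 2) • Sig⁻¹).PosSemidef :=
    posSemidef_smul_of_nonneg hSig.inv.posSemidef (sq_nonneg h)
  exact (t1.add t2).add t3
end

section
/- (One-step contraction of the covariance error.) Let $V$ be symmetric positive definite, $\eta > 0$, $h \leq \frac{\lambda_{\min}(V)}{2\eta(\lambda_{\min}(V)^2 + 2\lambda_{\max}(V)^2)}$, and $A = \mathrm{I} - \eta h V$. Let $\Sigma$ be symmetric positive definite with $\Sigma \succeq V^{-1}/(2\eta)$, set $\Lambda = \Sigma - V^{-1}/\eta$ and $\Lambda' = A \Lambda A - \eta h^2 V \Lambda \Sigma^{-1}$. Then $\|\Lambda'\|_2 \leq (1 - \tfrac{3\eta h}{2}\lambda_{\min}(V)) \|\Lambda\|_2$. -/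
open Matrix
open scoped Matrix.Norms.L2Operator

section Helpers

variable {d : ℕ} [DecidableEq (Fin d)]

private lemma psd_smul {M : Matrix (Fin d) (Fin d) ℝ} (hM : M.PosSemidef) {c : ℝ} (hc : 0 ≤ c) :
    (c • M).PosSemidef := by
  refine .of_dotProduct_mulVec_nonneg ?_ fun x => ?_
  · unfold Matrix.IsHermitian
    rw [conjTranspose_smul, hM.1]
    simp
  · rw [smul_mulVec, dotProduct_smul, smul_eq_mul]
    exact mul_nonneg hc (hM.dotProduct_mulVec_nonneg x)

private lemma diag_sub_smul_one (v : Fin d → ℝ) (c : ℝ) :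
    diagonal (fun i => v i - c) = diagonal v - c • (1 : Matrix (Fin d) (Fin d) ℝ) := by
  have h1 : (c • (1 : Matrix (Fin d) (Fin d) ℝ)) = diagonal (fun _ => c) := by
    ext i j
    by_cases h : i = j <;> simp [h, Matrix.one_apply]
  rw [h1, ← diagonal_sub]

private lemma conj_diag_sub_smul_one {U : Matrix (Fin d) (Fin d) ℝ}
    (hU : U * star U = 1) (v : Fin d → ℝ) (c : ℝ) :
    U * diagonal (fun i => v i - c) * star U
      = U * diagonal v * star U - c • (1 : Matrix (Fin d) (Fin d) ℝ) := by
  rw [diag_sub_smul_one, Matrix.mul_sub, Matrix.sub_mul, mul_smul_comm, smul_mul_assoc,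
    mul_one, hU]

private lemma norm_diagonal_le (v : Fin d → ℝ) (c : ℝ) (hc : 0 ≤ c) (h : ∀ i, |v i| ≤ c) :
    ‖diagonal v‖ ≤ c := by
  rw [Matrix.l2_opNorm_def]
  refine ContinuousLinearMap.opNorm_le_bound _ hc fun x => ?_
  have hrfl : ((Matrix.toEuclideanLin.trans LinearMap.toContinuousLinearMap) (diagonal v)) x
      = WithLp.toLp 2 (diagonal v *ᵥ x.ofLp) := rfl
  rw [hrfl, EuclideanSpace.norm_eq, EuclideanSpace.norm_eq]
  have hcs : c * Real.sqrt (∑ i, ‖x i‖ ^ 2) = Real.sqrt (c ^ 2 * ∑ i, ‖x i‖ ^ 2) := by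
    rw [Real.sqrt_mul (sq_nonneg c), Real.sqrt_sq hc]
  rw [hcs]
  apply Real.sqrt_le_sqrt
  rw [Finset.mul_sum]
  apply Finset.sum_le_sum
  intro i _
  have h2 : (WithLp.toLp 2 (diagonal v *ᵥ x.ofLp)) i
      = v i * x i := by
    simp [Matrix.mulVec_diagonal]
  rw [h2, Real.norm_eq_abs, Real.norm_eq_abs, abs_mul, mul_pow]
  exact mul_le_mul_of_nonneg_right (pow_le_pow_left₀ (abs_nonneg _) (h i) 2)
    (sq_nonneg _)

private lemma norm_conj_le {U : Matrix (Fin d) (Fin d) ℝ}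
    (hU : U ∈ Matrix.unitaryGroup (Fin d) ℝ)
    (v : Fin d → ℝ) (c : ℝ) (hc : 0 ≤ c) (h : ∀ i, |v i| ≤ c) :
    ‖U * diagonal v * star U‖ ≤ c := by
  rw [CStarRing.norm_mul_mem_unitary _ (Unitary.star_mem hU),
    CStarRing.norm_mem_unitary_mul _ hU]
  exact norm_diagonal_le v c hc h

private lemma dot_self_eigenvectorBasis {M : Matrix (Fin d) (Fin d) ℝ} (hM : M.IsHermitian)
    (i : Fin d) :
    (⇑(hM.eigenvectorBasis i) : Fin d → ℝ) ⬝ᵥ ⇑(hM.eigenvectorBasis i) = 1 := by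
  have h1 : (inner ℝ (hM.eigenvectorBasis i) (hM.eigenvectorBasis i) : ℝ)
      = star (⇑(hM.eigenvectorBasis i) : Fin d → ℝ) ⬝ᵥ ⇑(hM.eigenvectorBasis i) :=
    EuclideanSpace.inner_eq_star_dotProduct _ _
  have h2 : (inner ℝ (hM.eigenvectorBasis i) (hM.eigenvectorBasis i) : ℝ) = 1 := by
    rw [real_inner_self_eq_norm_sq, hM.eigenvectorBasis.orthonormal.1 i]
    norm_num
  rw [← h2, h1, star_trivial]

private lemma eig_le_of_psd {M : Matrix (Fin d) (Fin d) ℝ} (hM : M.IsHermitian) {c : ℝ}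
    (h : (c • (1 : Matrix (Fin d) (Fin d) ℝ) - M).PosSemidef) (i : Fin d) :
    hM.eigenvalues i ≤ c := by
  have hq := h.dotProduct_mulVec_nonneg ⇑(hM.eigenvectorBasis i)
  rw [sub_mulVec, smul_mulVec, one_mulVec, hM.mulVec_eigenvectorBasis,
    dotProduct_sub, dotProduct_smul, dotProduct_smul, star_trivial,
    dot_self_eigenvectorBasis hM i] at hq
  simp only [smul_eq_mul, mul_one] at hq
  linarith

private lemma eig_ge_of_psd {M : Matrix (Fin d) (Fin d) ℝ} (hM : M.IsHermitian) {c : ℝ}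
    (h : (M - c • (1 : Matrix (Fin d) (Fin d) ℝ)).PosSemidef) (i : Fin d) :
    c ≤ hM.eigenvalues i := by
  have hq := h.dotProduct_mulVec_nonneg ⇑(hM.eigenvectorBasis i)
  rw [sub_mulVec, smul_mulVec, one_mulVec, hM.mulVec_eigenvectorBasis,
    dotProduct_sub, dotProduct_smul, dotProduct_smul, star_trivial,
    dot_self_eigenvectorBasis hM i] at hq
  simp only [smul_eq_mul, mul_one] at hq
  linarith

private lemma real_spectral {M : Matrix (Fin d) (Fin d) ℝ} (hM : M.IsHermitian) :
    M = (hM.eigenvectorUnitary : Matrix (Fin d) (Fin d) ℝ) * diagonal hM.eigenvalues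
      * star (hM.eigenvectorUnitary : Matrix (Fin d) (Fin d) ℝ) := by
  have hd : diagonal ((RCLike.ofReal : ℝ → ℝ) ∘ hM.eigenvalues) = diagonal hM.eigenvalues := by
    congr 1
  rw [← hd]
  exact hM.spectral_theorem

private lemma unitary_conj_inv {U : Matrix (Fin d) (Fin d) ℝ} (h1 : U * star U = 1)
    (h2 : star U * U = 1) {v : Fin d → ℝ} (hv : ∀ i, v i ≠ 0) :
    (U * diagonal v * star U)⁻¹ = U * diagonal (fun i => (v i)⁻¹) * star U := by
  apply Matrix.inv_eq_right_inv
  have key : U * diagonal v * star U * (U * diagonal (fun i => (v i)⁻¹) * star U)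
      = U * (diagonal v * (star U * U) * diagonal fun i => (v i)⁻¹) * star U := by
    noncomm_ring
  rw [key, h2, mul_one, diagonal_mul_diagonal]
  have hone : (fun i => v i * (v i)⁻¹) = fun _ => (1 : ℝ) := by
    funext i
    exact mul_inv_cancel₀ (hv i)
  rw [hone, diagonal_one, mul_one, h1]

private lemma inv_spectral {M : Matrix (Fin d) (Fin d) ℝ} (hMpd : M.PosDef)
    (hM : M.IsHermitian) :
    M⁻¹ = (hM.eigenvectorUnitary : Matrix (Fin d) (Fin d) ℝ)
      * diagonal (fun i => (hM.eigenvalues i)⁻¹)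
      * star (hM.eigenvectorUnitary : Matrix (Fin d) (Fin d) ℝ) := by
  conv_lhs => rw [real_spectral hM]
  exact unitary_conj_inv (Matrix.mem_unitaryGroup_iff.mp hM.eigenvectorUnitary.2)
    (Matrix.mem_unitaryGroup_iff'.mp hM.eigenvectorUnitary.2)
    (fun i => (hMpd.eigenvalues_pos i).ne')

end Helpers

/-- One-step contraction of the covariance error. -/
theorem covariance_error_contraction {d : ℕ} [DecidableEq (Fin d)]
    (V : Matrix (Fin d) (Fin d) ℝ) (hV : V.PosDef) (hH : V.IsHermitian)
    (lmin lmax : ℝ)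
    (hlmin : IsLeast (Set.range hH.eigenvalues) lmin)
    (hlmax : IsGreatest (Set.range hH.eigenvalues) lmax)
    (η h : ℝ) (hη : 0 < η)
    (hstep : 0 < h ∧ h ≤ lmin / (2 * η * (lmin^2 + 2 * lmax^2)))
    (Sig : Matrix (Fin d) (Fin d) ℝ) (hSig : Sig.PosDef)
    (hlow : (Sig - (2 * η)⁻¹ • V⁻¹).PosSemidef) :
    let A : Matrix (Fin d) (Fin d) ℝ := 1 - (η * h) • V
    let Lam : Matrix (Fin d) (Fin d) ℝ := Sig - η⁻¹ • V⁻¹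
    ‖A * Lam * A - (η * h^2) • (V * Lam * Sig⁻¹)‖ ≤ (1 - 3 * η * h / 2 * lmin) * ‖Lam‖ := by
  intro A Lam
  obtain ⟨hh, hstep2⟩ := hstep
  -- basic eigenvalue facts
  obtain ⟨i0, hi0⟩ := hlmin.1
  have hlminpos : 0 < lmin := hi0 ▸ hV.eigenvalues_pos i0
  have hminmax : lmin ≤ lmax := hlmax.2 hlmin.1
  have hlmaxpos : 0 < lmax := lt_of_lt_of_le hlminpos hminmax
  have hle : ∀ i, hH.eigenvalues i ≤ lmax := fun i => hlmax.2 ⟨i, rfl⟩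
  have hge : ∀ i, lmin ≤ hH.eigenvalues i := fun i => hlmin.2 ⟨i, rfl⟩
  have hpos : ∀ i, 0 < hH.eigenvalues i := fun i => hV.eigenvalues_pos i
  have hηh : 0 < η * h := mul_pos hη hh
  -- step size consequences
  have hK : 0 < 2 * η * (lmin ^ 2 + 2 * lmax ^ 2) := by positivity
  have key : η * h * (lmin ^ 2 + 2 * lmax ^ 2) ≤ lmin / 2 := by
    have := (le_div_iff₀ hK).mp hstep2
    nlinarith
  have key2 : η * h * lmax ≤ 1 / 2 := by nlinarith
  have hc1 : 0 ≤ 1 - η * h * lmin := by nlinarith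
  -- unitary for V
  set u : Matrix (Fin d) (Fin d) ℝ := (hH.eigenvectorUnitary : Matrix (Fin d) (Fin d) ℝ) with hu
  have hu1 : u * star u = 1 := Matrix.mem_unitaryGroup_iff.mp hH.eigenvectorUnitary.2
  have humem : u ∈ Matrix.unitaryGroup (Fin d) ℝ := hH.eigenvectorUnitary.2
  have hVspec : V = u * diagonal hH.eigenvalues * star u := real_spectral hH
  -- ‖V‖ ≤ lmax
  have nV : ‖V‖ ≤ lmax := by
    rw [hVspec]
    exact norm_conj_le humem _ lmax hlmaxpos.le fun i =>
      abs_le.mpr ⟨by linarith [hpos i], hle i⟩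
  -- ‖A‖ ≤ 1 - ηh lmin
  have nA : ‖A‖ ≤ 1 - η * h * lmin := by
    have hAeq : A = u * diagonal (fun i => 1 - η * h * hH.eigenvalues i) * star u := by
      have hd : diagonal (fun i => 1 - η * h * hH.eigenvalues i)
          = 1 - (η * h) • diagonal hH.eigenvalues := by
        rw [← diagonal_one, ← diagonal_smul, ← diagonal_sub]
        rfl
      rw [hd, Matrix.mul_sub, Matrix.sub_mul, mul_one, hu1, mul_smul_comm, smul_mul_assoc,
        ← hVspec]
    rw [hAeq]
    refine norm_conj_le humem _ _ hc1 fun i => abs_le.mpr ⟨?_, ?_⟩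
    · have h1 : η * h * hH.eigenvalues i ≤ η * h * lmax :=
        mul_le_mul_of_nonneg_left (hle i) hηh.le
      nlinarith
    · have h2 : η * h * lmin ≤ η * h * hH.eigenvalues i :=
        mul_le_mul_of_nonneg_left (hge i) hηh.le
      linarith
  -- V⁻¹ spectral
  have hVinv : V⁻¹ = u * diagonal (fun i => (hH.eigenvalues i)⁻¹) * star u :=
    inv_spectral hV hH
  -- Sig ⪰ (2 η lmax)⁻¹ • 1
  have P0 : (V⁻¹ - lmax⁻¹ • (1 : Matrix (Fin d) (Fin d) ℝ)).PosSemidef := by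
    have heq : V⁻¹ - lmax⁻¹ • (1 : Matrix (Fin d) (Fin d) ℝ)
        = u * diagonal (fun i => (hH.eigenvalues i)⁻¹ - lmax⁻¹) * star u := by
      rw [conj_diag_sub_smul_one hu1, ← hVinv]
    rw [heq]
    have hdiag : (diagonal (fun i => (hH.eigenvalues i)⁻¹ - lmax⁻¹)).PosSemidef := by
      refine posSemidef_diagonal_iff.mpr fun i => ?_
      have : lmax⁻¹ ≤ (hH.eigenvalues i)⁻¹ := by
        apply inv_anti₀ (hpos i) (hle i)
      linarith
    have := hdiag.mul_mul_conjTranspose_same u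
    rwa [← Matrix.star_eq_conjTranspose] at this
  have P2 : (Sig - (2 * η * lmax)⁻¹ • (1 : Matrix (Fin d) (Fin d) ℝ)).PosSemidef := by
    have heq : Sig - (2 * η * lmax)⁻¹ • (1 : Matrix (Fin d) (Fin d) ℝ)
        = (Sig - (2 * η)⁻¹ • V⁻¹) + (2 * η)⁻¹ • (V⁻¹ - lmax⁻¹ • (1 : Matrix (Fin d) (Fin d) ℝ)) := by
      rw [smul_sub, smul_smul]
      rw [show (2 * η)⁻¹ * lmax⁻¹ = (2 * η * lmax)⁻¹ from (mul_inv _ _).symm]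
      abel
    rw [heq]
    exact hlow.add (psd_smul P0 (by positivity))
  -- eigenvalues of Sig
  have hSigHerm : Sig.IsHermitian := hSig.1
  have hSigEigLB : ∀ i, (2 * η * lmax)⁻¹ ≤ hSigHerm.eigenvalues i := fun i =>
    eig_ge_of_psd hSigHerm P2 i
  have hSigEigPos : ∀ i, 0 < hSigHerm.eigenvalues i := fun i => hSig.eigenvalues_pos i
  -- ‖Sig⁻¹‖ ≤ 2 η lmax
  have hSinv : Sig⁻¹ = (hSigHerm.eigenvectorUnitary : Matrix (Fin d) (Fin d) ℝ)
      * diagonal (fun i => (hSigHerm.eigenvalues i)⁻¹)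
      * star (hSigHerm.eigenvectorUnitary : Matrix (Fin d) (Fin d) ℝ) :=
    inv_spectral hSig hSigHerm
  have h2ηl : 0 < 2 * η * lmax := by positivity
  have nS : ‖Sig⁻¹‖ ≤ 2 * η * lmax := by
    rw [hSinv]
    refine norm_conj_le hSigHerm.eigenvectorUnitary.2 _ _ h2ηl.le fun i => abs_le.mpr ⟨?_, ?_⟩
    · have := (hSigEigPos i)
      have : 0 < (hSigHerm.eigenvalues i)⁻¹ := by positivity
      linarith
    · rw [show (2 * η * lmax) = ((2 * η * lmax)⁻¹)⁻¹ by rw [inv_inv]]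
      exact inv_anti₀ (by positivity) (hSigEigLB i)
  -- norm of the whole expression
  have hL : 0 ≤ ‖Lam‖ := norm_nonneg _
  have step1 : ‖A * Lam * A - (η * h ^ 2) • (V * Lam * Sig⁻¹)‖
      ≤ ‖A‖ * ‖Lam‖ * ‖A‖ + (η * h ^ 2) * (‖V‖ * ‖Lam‖ * ‖Sig⁻¹‖) := by
    calc ‖A * Lam * A - (η * h ^ 2) • (V * Lam * Sig⁻¹)‖
        ≤ ‖A * Lam * A‖ + ‖(η * h ^ 2) • (V * Lam * Sig⁻¹)‖ := norm_sub_le _ _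
      _ ≤ ‖A‖ * ‖Lam‖ * ‖A‖ + (η * h ^ 2) * (‖V‖ * ‖Lam‖ * ‖Sig⁻¹‖) := by
          gcongr ?_ + ?_
          · calc ‖A * Lam * A‖ ≤ ‖A * Lam‖ * ‖A‖ := norm_mul_le _ _
              _ ≤ ‖A‖ * ‖Lam‖ * ‖A‖ :=
                mul_le_mul_of_nonneg_right (norm_mul_le _ _) (norm_nonneg _)
          · rw [norm_smul, Real.norm_eq_abs, abs_of_nonneg (by positivity : (0:ℝ) ≤ η * h ^ 2)]
            gcongr
            calc ‖V * Lam * Sig⁻¹‖ ≤ ‖V * Lam‖ * ‖Sig⁻¹‖ := norm_mul_le _ _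
              _ ≤ ‖V‖ * ‖Lam‖ * ‖Sig⁻¹‖ :=
                mul_le_mul_of_nonneg_right (norm_mul_le _ _) (norm_nonneg _)
  have step2 : ‖A‖ * ‖Lam‖ * ‖A‖ + (η * h ^ 2) * (‖V‖ * ‖Lam‖ * ‖Sig⁻¹‖)
      ≤ (1 - η * h * lmin) * ‖Lam‖ * (1 - η * h * lmin)
        + (η * h ^ 2) * (lmax * ‖Lam‖ * (2 * η * lmax)) := by
    have hA0 : 0 ≤ ‖A‖ := norm_nonneg _
    have hV0 : 0 ≤ ‖V‖ := norm_nonneg _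
    have hS0 : 0 ≤ ‖Sig⁻¹‖ := norm_nonneg _
    refine add_le_add ?_ (mul_le_mul_of_nonneg_left ?_ (by positivity : (0:ℝ) ≤ η * h ^ 2))
    · calc ‖A‖ * ‖Lam‖ * ‖A‖ ≤ (1 - η * h * lmin) * ‖Lam‖ * ‖A‖ :=
          mul_le_mul_of_nonneg_right (mul_le_mul_of_nonneg_right nA hL) hA0
        _ ≤ (1 - η * h * lmin) * ‖Lam‖ * (1 - η * h * lmin) :=
          mul_le_mul_of_nonneg_left nA (mul_nonneg hc1 hL)
    · exact mul_le_mul (mul_le_mul_of_nonneg_right nV hL) nS hS0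
        (mul_nonneg hlmaxpos.le hL)
  have step3 : ∀ L : ℝ, 0 ≤ L → (1 - η * h * lmin) * L * (1 - η * h * lmin)
        + (η * h ^ 2) * (lmax * L * (2 * η * lmax))
      ≤ (1 - 3 * η * h / 2 * lmin) * L := by
    intro L hL0
    nlinarith [mul_le_mul_of_nonneg_left key (mul_nonneg hL0 hηh.le), sq_nonneg (η * h),
      mul_nonneg hL0 hηh.le]
  exact le_trans step1 (le_trans step2 (step3 _ hL))
end
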